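/- Let M be a compact metric space with Borel probability measure m, f : M → M Borel measurable, and B ⊆ M a Borel set with B ⊆ f⁻¹(B) and m(B) > 0. Then the set O_{f|B} of SRB-like measures for f restricted to B is nonempty and weak*-compact. -/

import Mathlib

set_option linter.unusedSectionVars false
set_option linter.unusedVariables false
set_option maxHeartbeats 1000000
open MeasureTheory Filter Metric Set Function Finset
open scoped Classical ENNReal Topology NNReal BoundedContinuousFunction

open Finset Function
open scoped Classical

/-- partial sums of `v` below index `i` (as a natural number bound) -/
noncomputable def psum {n : ℕ} (v : Fin n → ℝ) (i : ℕ) : ℝ :=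
  ∑ c ∈ Finset.univ.filter (fun c : Fin n => (c : ℕ) < i), v c

lemma psum_zero {n : ℕ} (v : Fin n → ℝ) : psum v 0 = 0 := by simp [psum]

lemma psum_succ {n : ℕ} (v : Fin n → ℝ) (i : ℕ) (h : i < n) :
    psum v (i + 1) = psum v i + v ⟨i, h⟩ := by
  rw [psum, psum]
  rw [show Finset.univ.filter (fun c : Fin n => (c : ℕ) < i + 1)
      = insert ⟨i, h⟩ (Finset.univ.filter (fun c : Fin n => (c : ℕ) < i)) by
    ext c
    simp only [Finset.mem_insert, Finset.mem_filter, Finset.mem_univ, true_and]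
    constructor
    · intro hc
      rcases Nat.lt_succ_iff_lt_or_eq.1 hc with h1 | h1
      · exact Or.inr h1
      · exact Or.inl (Fin.ext h1)
    · rintro (rfl | hc)
      · simp
      · omega]
  rw [Finset.sum_insert (by simp)]
  ring

lemma psum_mono {n : ℕ} {v : Fin n → ℝ} (hv : ∀ c, 0 ≤ v c) {i j : ℕ} (hij : i ≤ j) :
    psum v i ≤ psum v j := by
  apply Finset.sum_le_sum_of_subset_of_nonneg
  · intro c hc
    simp only [Finset.mem_filter, Finset.mem_univ, true_and] at hc ⊢
    omega
  · intro c _ _; exact hv c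

lemma psum_total {n : ℕ} (v : Fin n → ℝ) : psum v n = ∑ c, v c := by
  rw [psum]
  congr 1
  ext c
  simp [c.isLt]

lemma psum_eq_filter_lt {n : ℕ} (v : Fin n → ℝ) (c : Fin n) :
    psum v c = ∑ c' ∈ Finset.univ.filter (fun c' => c' < c), v c' := by
  unfold psum
  congr 1

/-- The digit selection lemma: `t ∈ [A, A + ∑ v)` lies in exactly one of the consecutive
intervals `[A + psum v c, A + psum v c + v c)`. -/
lemma exists_unique_digit {n : ℕ} (v : Fin n → ℝ) (hv : ∀ c, 0 ≤ v c) {A t : ℝ}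
    (h0 : A ≤ t) (h1 : t < A + ∑ c, v c) :
    ∃! c : Fin n, A + psum v c ≤ t ∧ t < A + psum v c + v c := by
  have htot : t - A < psum v n := by rw [psum_total]; linarith
  set P : ℕ → Prop := fun i => psum v i ≤ t - A with hP
  have hP0 : P 0 := by simp [hP, psum_zero]; linarith
  set i := Nat.findGreatest P n with hi
  have hPi : P i := Nat.findGreatest_spec (Nat.zero_le n) hP0
  have hilt : i < n := by
    rcases Nat.lt_or_ge i n with h | h
    · exact h
    · exfalso
      have hle : i ≤ n := Nat.findGreatest_le n
      have : i = n := le_antisymm hle h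
      rw [this] at hPi
      simp only [hP] at hPi
      linarith
  have hnext0 : ¬ P (i + 1) := Nat.findGreatest_is_greatest (Nat.lt_succ_self i) (by omega)
  have hnext : t - A < psum v i + v ⟨i, hilt⟩ := by
    by_contra hcon
    push_neg at hcon
    exact hnext0 (by simp only [hP]; rw [psum_succ v i hilt]; linarith)
  refine ⟨⟨i, hilt⟩, ⟨by simpa [hP] using by linarith [hPi], by linarith⟩, ?_⟩
  rintro ⟨j, hj⟩ ⟨hj1, hj2⟩
  apply Fin.ext
  show j = i
  by_contra hne
  rcases Nat.lt_or_ge j i with h | h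
  · have : psum v (j+1) ≤ psum v i := psum_mono hv (by omega)
    rw [psum_succ v j (by omega)] at this
    simp only [hP] at hPi
    linarith
  · have hij : i < j := by omega
    have : psum v (i+1) ≤ psum v j := psum_mono hv (by omega)
    rw [psum_succ v i hilt] at this
    linarith


section Tree

variable {n : ℕ → ℕ}

/-- choose the digit `c` such that `t ∈ [A + psum v c, A + psum v c + v c)`. -/
noncomputable def digAux {m : ℕ} (hm : 0 < m) (v : Fin m → ℝ) (A t : ℝ) : Fin m :=
  if h : ∃ c : Fin m, A + psum v c ≤ t ∧ t < A + psum v c + v c then h.choose else ⟨0, hm⟩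

lemma digAux_spec {m : ℕ} (hm : 0 < m) (v : Fin m → ℝ) (A t : ℝ)
    (h : ∃ c : Fin m, A + psum v c ≤ t ∧ t < A + psum v c + v c) :
    A + psum v (digAux hm v A t) ≤ t ∧ t < A + psum v (digAux hm v A t) + v (digAux hm v A t) := by
  rw [digAux, dif_pos h]
  exact h.choose_spec

/-- Left endpoint of the level-`k` interval of the branch `b`. -/
noncomputable def treeA (w : ℕ → (∀ j, Fin (n j)) → ℝ) : ℕ → (∀ j, Fin (n j)) → ℝ
  | 0, b => psum (fun c => w 0 (Function.update b 0 c)) (b 0 : ℕ)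
  | (k+1), b => treeA w k b + psum (fun c => w (k+1) (Function.update b (k+1) c)) ((b (k+1) : ℕ))

/-- The branch of `t` computed up to level `k` (coordinates beyond `k` are junk). -/
noncomputable def treeB (hn : ∀ j, 0 < n j) (w : ℕ → (∀ j, Fin (n j)) → ℝ) (t : ℝ) :
    ℕ → ∀ j, Fin (n j)
  | 0 => Function.update (fun j => ⟨0, hn j⟩) 0
            (digAux (hn 0) (fun c => w 0 (Function.update (fun j => ⟨0, hn j⟩) 0 c)) 0 t)
  | (k+1) => Function.update (treeB hn w t k) (k+1)
      (digAux (hn (k+1)) (fun c => w (k+1) (Function.update (treeB hn w t k) (k+1) c))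
        (treeA w k (treeB hn w t k)) t)

variable (hn : ∀ j, 0 < n j) (w : ℕ → (∀ j, Fin (n j)) → ℝ)

lemma treeB_agree (t : ℝ) : ∀ k' k, k ≤ k' → ∀ j, j ≤ k → treeB hn w t k' j = treeB hn w t k j := by
  intro k'
  induction k' with
  | zero =>
      intro k hk j hj
      have hk0 : k = 0 := by omega
      subst hk0; rfl
  | succ k' ih =>
      intro k hk j hj
      rcases Nat.eq_or_lt_of_le hk with h | h
      · subst h; rfl
      · have step : treeB hn w t (k'+1) j = treeB hn w t k' j :=
          Function.update_of_ne (by omega) _ _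
        rw [step]
        exact ih k (by omega) j hj


lemma psum_nonneg {m : ℕ} {v : Fin m → ℝ} (hv : ∀ c, 0 ≤ v c) (i : ℕ) : 0 ≤ psum v i :=
  Finset.sum_nonneg fun c _ => hv c

lemma treeA_zero (b : ∀ j, Fin (n j)) :
    treeA w 0 b = psum (fun c => w 0 (Function.update b 0 c)) (b 0 : ℕ) := rfl

lemma treeA_succ (k : ℕ) (b : ∀ j, Fin (n j)) :
    treeA w (k+1) b = treeA w k b
      + psum (fun c => w (k+1) (Function.update b (k+1) c)) ((b (k+1) : ℕ)) := rfl

lemma treeB_zero (t : ℝ) :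
    treeB hn w t 0 = Function.update (fun j => (⟨0, hn j⟩ : Fin (n j))) 0
      (digAux (hn 0) (fun c => w 0 (Function.update (fun j => (⟨0, hn j⟩ : Fin (n j))) 0 c)) 0 t) := rfl

lemma treeB_succ (t : ℝ) (k : ℕ) :
    treeB hn w t (k+1) = Function.update (treeB hn w t k) (k+1)
      (digAux (hn (k+1)) (fun c => w (k+1) (Function.update (treeB hn w t k) (k+1) c))
        (treeA w k (treeB hn w t k)) t) := rfl

variable (hwc : ∀ k b b', (∀ j, j ≤ k → b j = b' j) → w k b = w k b')

include hwc in
lemma treeA_congr : ∀ k (b b' : ∀ j, Fin (n j)), (∀ j, j ≤ k → b j = b' j) →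
    treeA w k b = treeA w k b' := by
  intro k
  induction k with
  | zero =>
      intro b b' h
      rw [treeA_zero, treeA_zero]
      have h0 : (b 0 : ℕ) = (b' 0 : ℕ) := by rw [h 0 le_rfl]
      rw [h0]
      unfold psum
      apply Finset.sum_congr rfl
      intro c _
      apply hwc 0
      intro j hj
      have hj0 : j = 0 := by omega
      subst hj0
      simp [Function.update_self]
  | succ k ih =>
      intro b b' h
      rw [treeA_succ, treeA_succ, ih b b' (fun j hj => h j (by omega))]
      have hv : (fun c => w (k+1) (Function.update b (k+1) c))
          = (fun c => w (k+1) (Function.update b' (k+1) c)) := by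
        funext c
        apply hwc (k+1)
        intro j hj
        rcases eq_or_ne j (k+1) with rfl | hne
        · simp [Function.update_self]
        · rw [Function.update_of_ne hne, Function.update_of_ne hne]
          exact h j (by omega)
      rw [hv, h (k+1) le_rfl]

variable (hw0 : ∀ k b, 0 ≤ w k b)

include hw0 in
lemma treeA_nonneg : ∀ k (b : ∀ j, Fin (n j)), 0 ≤ treeA w k b := by
  intro k
  induction k with
  | zero => intro b; rw [treeA_zero]; exact psum_nonneg (fun c => hw0 0 _) _
  | succ k ih =>
      intro b
      rw [treeA_succ]
      have := psum_nonneg (v := fun c => w (k+1) (Function.update b (k+1) c))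
        (fun c => hw0 (k+1) _) ((b (k+1) : ℕ))
      linarith [ih b]

variable (hw1 : ∀ b : ∀ j, Fin (n j), ∑ c, w 0 (Function.update b 0 c) = 1)
variable (hws : ∀ k (b : ∀ j, Fin (n j)), ∑ c, w (k+1) (Function.update b (k+1) c) = w k b)

include hw0 hws in
lemma treeA_add_w_succ_le (k : ℕ) (b : ∀ j, Fin (n j)) :
    treeA w (k+1) b + w (k+1) b ≤ treeA w k b + w k b := by
  rw [treeA_succ]
  set v : Fin (n (k+1)) → ℝ := fun c => w (k+1) (Function.update b (k+1) c) with hv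
  have hwb : w (k+1) b = v (b (k+1)) := by rw [hv]; simp [Function.update_eq_self]
  have e1 : psum v ((b (k+1) : ℕ)) + v (b (k+1)) = psum v ((b (k+1) : ℕ) + 1) :=
    (psum_succ v _ (b (k+1)).isLt).symm
  have e2 : psum v ((b (k+1) : ℕ) + 1) ≤ psum v (n (k+1)) :=
    psum_mono (fun c => hw0 (k+1) _) (b (k+1)).isLt
  have e3 : psum v (n (k+1)) = w k b := by rw [psum_total]; exact hws k b
  linarith [hwb, e1, e2, e3]

include hw0 hw1 hws in
lemma treeA_add_w_le_one : ∀ k (b : ∀ j, Fin (n j)), treeA w k b + w k b ≤ 1 := by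
  intro k
  induction k with
  | zero =>
      intro b
      rw [treeA_zero]
      set v : Fin (n 0) → ℝ := fun c => w 0 (Function.update b 0 c) with hv
      have hwb : w 0 b = v (b 0) := by rw [hv]; simp [Function.update_eq_self]
      have e1 : psum v ((b 0 : ℕ)) + v (b 0) = psum v ((b 0 : ℕ) + 1) :=
        (psum_succ v _ (b 0).isLt).symm
      have e2 : psum v ((b 0 : ℕ) + 1) ≤ psum v (n 0) := psum_mono (fun c => hw0 0 _) (b 0).isLt
      have e3 : psum v (n 0) = 1 := by rw [psum_total]; exact hw1 b
      linarith [hwb, e1, e2, e3]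
  | succ k ih =>
      intro b
      calc treeA w (k+1) b + w (k+1) b ≤ treeA w k b + w k b :=
            treeA_add_w_succ_le w hw0 hws k b
        _ ≤ 1 := ih b

include hw0 in
lemma treeA_le_treeA_succ (k : ℕ) (b : ∀ j, Fin (n j)) :
    treeA w k b ≤ treeA w (k+1) b := by
  rw [treeA_succ]
  have := psum_nonneg (v := fun c => w (k+1) (Function.update b (k+1) c))
    (fun c => hw0 (k+1) _) ((b (k+1) : ℕ))
  linarith

include hwc hw0 hw1 hws in
lemma treeB_mem {t : ℝ} (h0 : 0 ≤ t) (h1 : t < 1) :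
    ∀ k, treeA w k (treeB hn w t k) ≤ t
      ∧ t < treeA w k (treeB hn w t k) + w k (treeB hn w t k) := by
  intro k
  induction k with
  | zero =>
      set b₀ : ∀ j, Fin (n j) := fun j => ⟨0, hn j⟩ with hb₀
      set v : Fin (n 0) → ℝ := fun c => w 0 (Function.update b₀ 0 c) with hv
      have hex := exists_unique_digit v (fun c => hw0 0 _) (A := 0) (t := t)
        (by linarith) (by rw [show ∑ c, v c = 1 from hw1 b₀]; linarith)
      have hspec := digAux_spec (hn 0) v 0 t hex.exists
      have hbeq : treeB hn w t 0 = Function.update b₀ 0 (digAux (hn 0) v 0 t) := rfl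
      rw [hbeq, treeA_zero]
      have e1 : (fun c' => w 0 (Function.update (Function.update b₀ 0 (digAux (hn 0) v 0 t)) 0 c'))
          = v := by funext c'; rw [Function.update_idem]
      have e2 : (Function.update b₀ 0 (digAux (hn 0) v 0 t)) 0 = digAux (hn 0) v 0 t :=
        Function.update_self _ _ _
      have e3 : w 0 (Function.update b₀ 0 (digAux (hn 0) v 0 t)) = v (digAux (hn 0) v 0 t) := rfl
      rw [e1, e2, e3]
      constructor <;> linarith [hspec.1, hspec.2]
  | succ k ih =>
      obtain ⟨ih1, ih2⟩ := ih
      set bk := treeB hn w t k with hbk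
      set v : Fin (n (k+1)) → ℝ := fun c => w (k+1) (Function.update bk (k+1) c) with hv
      have hsum : ∑ c, v c = w k bk := hws k bk
      have hex := exists_unique_digit v (fun c => hw0 (k+1) _) (A := treeA w k bk) (t := t)
        ih1 (by rw [hsum]; exact ih2)
      set c := digAux (hn (k+1)) v (treeA w k bk) t with hc
      have hspec := digAux_spec (hn (k+1)) v (treeA w k bk) t hex.exists
      have hbeq : treeB hn w t (k+1) = Function.update bk (k+1) c := rfl
      rw [hbeq, treeA_succ]
      have e0 : treeA w k (Function.update bk (k+1) c) = treeA w k bk :=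
        treeA_congr w hwc k _ _ (fun j hj => Function.update_of_ne (by omega) _ _)
      have e1 : (fun c' => w (k+1) (Function.update (Function.update bk (k+1) c) (k+1) c'))
          = v := by funext c'; rw [Function.update_idem]
      have e2 : (Function.update bk (k+1) c) (k+1) = c := Function.update_self _ _ _
      have e3 : w (k+1) (Function.update bk (k+1) c) = v c := rfl
      rw [e0, e1, e2, e3]
      exact ⟨hspec.1, hspec.2⟩

include hwc hw0 hw1 hws in
lemma treeB_unique {t : ℝ} (h0 : 0 ≤ t) (h1 : t < 1) :
    ∀ k (b : ∀ j, Fin (n j)), treeA w k b ≤ t → t < treeA w k b + w k b →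
      ∀ j, j ≤ k → treeB hn w t k j = b j := by
  intro k
  induction k with
  | zero =>
      intro b hb1 hb2 j hj
      have hj0 : j = 0 := by omega
      subst hj0
      set b₀ : ∀ j, Fin (n j) := fun j => ⟨0, hn j⟩ with hb₀
      set v : Fin (n 0) → ℝ := fun c => w 0 (Function.update b₀ 0 c) with hv
      have hvb : (fun c => w 0 (Function.update b 0 c)) = v := by
        funext c
        apply hwc 0
        intro j hj
        have hj0 : j = 0 := by omega
        subst hj0
        simp [Function.update_self]
      have hwb : w 0 b = v (b 0) := by
        conv_lhs => rw [← Function.update_eq_self 0 b]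
        exact congrFun hvb (b 0)
      have hP : (0:ℝ) + psum v ((b 0 : ℕ)) ≤ t ∧ t < 0 + psum v ((b 0 : ℕ)) + v (b 0) := by
        rw [treeA_zero, hvb] at hb1 hb2
        rw [hwb] at hb2
        constructor <;> linarith
      have hex := exists_unique_digit v (fun c => hw0 0 _) (A := 0) (t := t)
        (by linarith) (by rw [show ∑ c, v c = 1 from hw1 b₀]; linarith)
      have hspec := digAux_spec (hn 0) v 0 t hex.exists
      have hdig : digAux (hn 0) v 0 t = b 0 := hex.unique hspec hP
      show (Function.update b₀ 0 (digAux (hn 0) v 0 t)) 0 = b 0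
      rw [Function.update_self, hdig]
  | succ k ih =>
      intro b hb1 hb2 j hj
      have hnest1 : treeA w k b ≤ t := le_trans (treeA_le_treeA_succ w hw0 k b) hb1
      have hnest2 : t < treeA w k b + w k b :=
        lt_of_lt_of_le hb2 (treeA_add_w_succ_le w hw0 hws k b)
      have hIH : ∀ j', j' ≤ k → treeB hn w t k j' = b j' := ih b hnest1 hnest2
      set bk := treeB hn w t k with hbk
      have hAeq : treeA w k bk = treeA w k b := treeA_congr w hwc k _ _ hIH
      have hwkeq : w k bk = w k b := hwc k _ _ hIH
      set v : Fin (n (k+1)) → ℝ := fun c => w (k+1) (Function.update bk (k+1) c) with hv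
      have hveq : (fun c => w (k+1) (Function.update b (k+1) c)) = v := by
        funext c
        apply hwc (k+1)
        intro j' hj'
        rcases eq_or_ne j' (k+1) with rfl | hne
        · simp [Function.update_self]
        · rw [Function.update_of_ne hne, Function.update_of_ne hne]
          exact (hIH j' (by omega)).symm
      have hwb : w (k+1) b = v (b (k+1)) := by
        conv_lhs => rw [← Function.update_eq_self (k+1) b]
        exact congrFun hveq (b (k+1))
      have hP : treeA w k bk + psum v ((b (k+1) : ℕ)) ≤ t
          ∧ t < treeA w k bk + psum v ((b (k+1) : ℕ)) + v (b (k+1)) := by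
        rw [treeA_succ, hveq] at hb1 hb2
        rw [hwb] at hb2
        rw [hAeq]
        constructor <;> linarith
      have hsum : ∑ c, v c = w k bk := hws k bk
      have hex := exists_unique_digit v (fun c => hw0 (k+1) _) (A := treeA w k bk) (t := t)
        (by rw [hAeq]; exact hnest1) (by rw [hsum, hAeq, hwkeq]; exact hnest2)
      have hspec := digAux_spec (hn (k+1)) v (treeA w k bk) t hex.exists
      have hdig : digAux (hn (k+1)) v (treeA w k bk) t = b (k+1) := hex.unique hspec hP
      show (Function.update bk (k+1) (digAux (hn (k+1)) v (treeA w k bk) t)) j = b j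
      rcases eq_or_ne j (k+1) with rfl | hne
      · rw [Function.update_self, hdig]
      · rw [Function.update_of_ne hne]
        exact hIH j (by omega)

include hwc hw0 hw1 hws in
lemma treeB_fiber (k : ℕ) (b : ∀ j, Fin (n j)) :
    {t : ℝ | t ∈ Set.Ico (0:ℝ) 1 ∧ ∀ j, j ≤ k → treeB hn w t k j = b j}
      = Set.Ico (treeA w k b) (treeA w k b + w k b) := by
  ext t
  simp only [Set.mem_setOf_eq, Set.mem_Ico]
  constructor
  · rintro ⟨⟨ht0, ht1⟩, hagree⟩
    obtain ⟨hm1, hm2⟩ := treeB_mem hn w hwc hw0 hw1 hws ht0 ht1 k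
    have e1 : treeA w k (treeB hn w t k) = treeA w k b := treeA_congr w hwc k _ _ hagree
    have e2 : w k (treeB hn w t k) = w k b := hwc k _ _ hagree
    constructor <;> linarith
  · rintro ⟨hb1, hb2⟩
    have ht0 : 0 ≤ t := le_trans (treeA_nonneg w hw0 k b) hb1
    have ht1 : t < 1 := lt_of_lt_of_le hb2 (treeA_add_w_le_one w hw0 hw1 hws k b)
    exact ⟨⟨ht0, ht1⟩, treeB_unique hn w hwc hw0 hw1 hws ht0 ht1 k b hb1 hb2⟩

end Tree


theorem exists_fin_partition {M : Type*} [MetricSpace M] [CompactSpace M] [MeasurableSpace M]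
    [BorelSpace M] [Nonempty M] {ε : ℝ} (hε : 0 < ε) :
    ∃ (n : ℕ) (Q : Fin n → Set M), 0 < n ∧ (∀ i, MeasurableSet (Q i)) ∧
      (Pairwise (Function.onFun Disjoint Q)) ∧ (⋃ i, Q i) = univ ∧
      ∀ i, ∀ x ∈ Q i, ∀ y ∈ Q i, dist x y < ε := by
  have hcover : (univ : Set M) ⊆ ⋃ x : M, ball x (ε/3) := by
    intro x _; exact mem_iUnion.2 ⟨x, mem_ball_self (by linarith)⟩
  obtain ⟨t, ht⟩ := isCompact_univ.elim_finite_subcover (fun x : M => ball x (ε/3))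
    (fun x => isOpen_ball) hcover
  classical
  set l := t.toList with hl
  set f : ℕ → Set M := fun i => if h : i < l.length then ball (l.get ⟨i, h⟩) (ε/3) else ∅ with hf
  have hfU : (⋃ i, f i) = univ := by
    apply eq_univ_of_univ_subset
    intro x hx
    obtain ⟨c, hc, hxc⟩ := mem_iUnion₂.1 (ht (mem_univ x))
    have hcl : c ∈ l := by simp [hl, Finset.mem_toList, hc]
    obtain ⟨i, hi⟩ := List.get_of_mem hcl
    refine mem_iUnion.2 ⟨i, ?_⟩
    simp only [hf, dif_pos i.isLt]
    rw [hi]; exact hxc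
  set n : ℕ := l.length + 1 with hn
  have hfempty : ∀ i, ¬ i < l.length → f i = ∅ := fun i h => by simp [hf, h]
  refine ⟨n, fun i => disjointed f i, Nat.succ_pos _, ?_, ?_, ?_, ?_⟩
  · intro i
    exact MeasurableSet.disjointed (fun j => by
      by_cases h : j < l.length <;> simp [hf, h, measurableSet_ball]) i
  · intro i j hij
    exact disjoint_disjointed f (Fin.val_injective.ne hij)
  · apply eq_univ_of_univ_subset
    intro x hx
    have hx2 : x ∈ ⋃ i, disjointed f i := by rw [iUnion_disjointed, hfU]; trivial
    obtain ⟨i, hi⟩ := mem_iUnion.1 hx2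
    have hilt : i < n := by
      by_contra h
      have h2 : ¬ i < l.length := by omega
      have h3 := disjointed_subset f i hi
      rw [hfempty i h2] at h3
      exact h3
    exact mem_iUnion.2 ⟨⟨i, hilt⟩, hi⟩
  · intro i x hx y hy
    have hx' := disjointed_subset f i hx
    have hy' := disjointed_subset f i hy
    by_cases h : (i : ℕ) < l.length
    · simp only [hf, dif_pos h] at hx' hy'
      have h3 := dist_triangle x (l.get ⟨i, h⟩) y
      rw [mem_ball] at hx' hy'
      have e1 : dist x (l.get ⟨(i:ℕ), h⟩) = dist (l.get ⟨(i:ℕ), h⟩) x := dist_comm _ _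
      have e2 : dist (l.get ⟨(i:ℕ), h⟩) y = dist y (l.get ⟨(i:ℕ), h⟩) := dist_comm _ _
      linarith [hx', hy']
    · rw [hfempty i h] at hx'
      exact absurd hx' (notMem_empty x)


section Helpers
variable {M : Type*} [MetricSpace M] [MeasurableSpace M] [BorelSpace M]
variable {ι : Type*} [Fintype ι]

lemma sum_measure_inter (ν : Measure M) (C : ι → Set M) (hmeas : ∀ i, MeasurableSet (C i))
    (hdisj : Pairwise (Function.onFun Disjoint C)) (hcover : (⋃ i, C i) = univ)
    {s : Set M} (hs : MeasurableSet s) : ∑ i, ν (s ∩ C i) = ν s := by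
  have h1 : ⋃ i, (s ∩ C i) = s := by rw [← inter_iUnion, hcover, inter_univ]
  have hd : Pairwise (Function.onFun Disjoint (fun i => s ∩ C i)) := fun i j hij =>
    (hdisj hij).mono (inter_subset_right) (inter_subset_right)
  have h2 : ν s = ∑ i, ν (s ∩ C i) := by
    conv_lhs => rw [← h1]
    rw [measure_iUnion hd (fun i => hs.inter (hmeas i)), tsum_fintype]
  exact h2.symm

lemma integral_partition (ν : Measure M) [IsProbabilityMeasure ν] (C : ι → Set M)
    (hmeas : ∀ i, MeasurableSet (C i)) (hdisj : Pairwise (Function.onFun Disjoint C))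
    (hcover : (⋃ i, C i) = univ) (f : M →ᵇ ℝ) :
    ∫ x, f x ∂ν = ∑ i, ∫ x in C i, f x ∂ν := by
  have hint : Integrable f ν := f.integrable ν
  rw [← setIntegral_univ, ← hcover, integral_iUnion hmeas hdisj hint.integrableOn, tsum_fintype]

lemma abs_integral_sub_sum_le (ν : Measure M) [IsProbabilityMeasure ν] (C : ι → Set M)
    (hmeas : ∀ i, MeasurableSet (C i)) (hdisj : Pairwise (Function.onFun Disjoint C))
    (hcover : (⋃ i, C i) = univ) (f : M →ᵇ ℝ) (pts : ι → M)
    (hpt : ∀ i, (C i).Nonempty → pts i ∈ C i) {ε : ℝ} (hε : 0 ≤ ε)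
    (hosc : ∀ i, ∀ x ∈ C i, ∀ y ∈ C i, |f x - f y| ≤ ε) :
    |∫ x, f x ∂ν - ∑ i, f (pts i) * (ν (C i)).toReal| ≤ ε := by
  rw [integral_partition ν C hmeas hdisj hcover f, ← Finset.sum_sub_distrib]
  have key : ∀ i, |∫ x in C i, f x ∂ν - f (pts i) * (ν (C i)).toReal| ≤ ε * (ν (C i)).toReal := by
    intro i
    rcases eq_empty_or_nonempty (C i) with he | hne
    · simp [he]
    · have hconst : f (pts i) * (ν (C i)).toReal = ∫ _ in C i, f (pts i) ∂ν := by
        rw [setIntegral_const]; rw [smul_eq_mul]; rw [measureReal_def]; ring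
      rw [hconst, ← integral_sub (f.integrable ν).integrableOn
        (integrable_const _).integrableOn]
      have hb : ∀ x ∈ C i, ‖f x - f (pts i)‖ ≤ ε := fun x hx => hosc i x hx (pts i) (hpt i hne)
      calc |∫ x in C i, (f x - f (pts i)) ∂ν| = ‖∫ x in C i, (f x - f (pts i)) ∂ν‖ := rfl
        _ ≤ ε * (ν (C i)).toReal := by
            apply norm_setIntegral_le_of_norm_le_const (measure_lt_top ν (C i))
            · intro x hx; exact hb x hx
  calc |∑ i, (∫ x in C i, f x ∂ν - f (pts i) * (ν (C i)).toReal)|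
      ≤ ∑ i, |∫ x in C i, f x ∂ν - f (pts i) * (ν (C i)).toReal| := Finset.abs_sum_le_sum_abs _ _
    _ ≤ ∑ i, ε * (ν (C i)).toReal := Finset.sum_le_sum (fun i _ => key i)
    _ = ε * ∑ i, (ν (C i)).toReal := by rw [Finset.mul_sum]
    _ = ε * 1 := by
        congr 1
        have := sum_measure_inter ν C hmeas hdisj hcover (s := univ) MeasurableSet.univ
        simp only [Set.univ_inter] at this
        rw [← ENNReal.toReal_sum (fun i _ => measure_ne_top ν (C i)), this, measure_univ,
          ENNReal.toReal_one]
    _ = ε := mul_one ε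

end Helpers


section Main
variable {M : Type*} [MetricSpace M] [CompactSpace M] [MeasurableSpace M] [BorelSpace M]
  [Nonempty M]

theorem prob_seq_compact (μs : ℕ → ProbabilityMeasure M) :
    ∃ (μ : ProbabilityMeasure M) (φ : ℕ → ℕ), StrictMono φ ∧
      Tendsto (fun i => μs (φ i)) atTop (𝓝 μ) := by
  classical
  -- Step 1: partitions
  have hpart : ∀ j : ℕ, ∃ (n : ℕ) (Q : Fin n → Set M), 0 < n ∧ (∀ i, MeasurableSet (Q i)) ∧
      (Pairwise (Function.onFun Disjoint Q)) ∧ (⋃ i, Q i) = univ ∧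
      ∀ i, ∀ x ∈ Q i, ∀ y ∈ Q i, dist x y < 1/(j+1) := by
    intro j
    exact exists_fin_partition (by positivity)
  choose N Q hNpos hQmeas hQdisj hQcover hQdiam using hpart
  have hix : ∀ (j : ℕ) (x : M), ∃ i, x ∈ Q j i := by
    intro j x
    have hx : x ∈ ⋃ i, Q j i := by rw [hQcover j]; trivial
    exact mem_iUnion.1 hx
  choose ix hix using hix
  -- Step 2: cells
  set cl : (k : ℕ) → (∀ j, Fin (N j)) → Set M :=
    fun k b => ⋂ j ∈ Finset.range (k+1), Q j (b j) with hcl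
  have cl_mem_iff : ∀ k b (x : M), x ∈ cl k b ↔ ∀ j, j ≤ k → x ∈ Q j (b j) := by
    intro k b x
    simp [hcl, Finset.mem_range, Nat.lt_succ_iff]
  have cl_meas : ∀ k b, MeasurableSet (cl k b) := fun k b =>
    Finset.measurableSet_biInter _ (fun j _ => hQmeas j _)
  have cl_congr : ∀ k (b b' : ∀ j, Fin (N j)), (∀ j, j ≤ k → b j = b' j) →
      cl k b = cl k b' := by
    intro k b b' h
    ext x
    rw [cl_mem_iff, cl_mem_iff]
    constructor <;> intro hx j hj
    · rw [← h j hj]; exact hx j hj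
    · rw [h j hj]; exact hx j hj
  have cl_zero : ∀ b, cl 0 b = Q 0 (b 0) := by
    intro b; ext x; rw [cl_mem_iff]
    constructor
    · intro h; exact h 0 le_rfl
    · intro h j hj; have : j = 0 := by omega
      subst this; exact h
  have cl_succ : ∀ k b, cl (k+1) b = cl k b ∩ Q (k+1) (b (k+1)) := by
    intro k b; ext x
    rw [mem_inter_iff, cl_mem_iff, cl_mem_iff]
    constructor
    · intro h; exact ⟨fun j hj => h j (by omega), h (k+1) le_rfl⟩
    · rintro ⟨h1, h2⟩ j hj
      rcases eq_or_ne j (k+1) with rfl | hne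
      · exact h2
      · exact h1 j (by omega)
  have cl_anti : ∀ k k' b, k ≤ k' → cl k' b ⊆ cl k b := by
    intro k k' b h x hx
    rw [cl_mem_iff] at hx ⊢
    exact fun j hj => hx j (le_trans hj h)
  have cl_disj : ∀ k (b b' : ∀ j, Fin (N j)) (j : ℕ), j ≤ k → b j ≠ b' j →
      Disjoint (cl k b) (cl k b') := by
    intro k b b' j hj hne
    apply Set.disjoint_left.2
    intro x hx hx'
    rw [cl_mem_iff] at hx hx'
    exact Set.disjoint_left.1 (hQdisj j hne) (hx j hj) (hx' j hj)
  -- padding of prefixes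
  set padc : ∀ k : ℕ, (∀ j : Fin (k+1), Fin (N j)) → (∀ j, Fin (N j)) :=
    fun k p j => if h : j < k+1 then p ⟨j, h⟩ else ⟨0, hNpos j⟩ with hpadc
  have padc_le : ∀ k (p : ∀ j : Fin (k+1), Fin (N j)) (j : ℕ) (hj : j ≤ k),
      padc k p j = p ⟨j, by omega⟩ := by
    intro k p j hj
    simp only [hpadc]
    rw [dif_pos (by omega : j < k+1)]
  -- Step 3: diagonal extraction
  set T := (k : ℕ) × (∀ j : Fin (k+1), Fin (N j)) with hT
  have hT1 : ∀ (m : ℕ) (p : T), ((μs m : Measure M) (cl p.1 (padc p.1 p.2))).toReal ∈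
      Set.Icc (0:ℝ) 1 := by
    intro m p
    constructor
    · exact ENNReal.toReal_nonneg
    · rw [show (1:ℝ) = (1:ℝ≥0∞).toReal from rfl]
      exact ENNReal.toReal_mono ENNReal.one_ne_top prob_le_one
  set G : ℕ → (T → Set.Icc (0:ℝ) 1) :=
    fun m p => ⟨((μs m : Measure M) (cl p.1 (padc p.1 p.2))).toReal, hT1 m p⟩ with hG
  obtain ⟨L, -, φ, hφmono, hφlim⟩ := isCompact_univ.tendsto_subseq (x := G)
    (fun m => mem_univ _)
  have hL : ∀ p : T,
      Tendsto (fun m => ((μs (φ m) : Measure M) (cl p.1 (padc p.1 p.2))).toReal)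
        atTop (𝓝 (L p : ℝ)) := by
    intro p
    have h1 : Tendsto (fun m => (G (φ m)) p) atTop (𝓝 (L p)) := by
      exact (tendsto_pi_nhds.1 hφlim) p
    exact (continuous_subtype_val.tendsto (L p)).comp h1
  set w : ℕ → (∀ j, Fin (N j)) → ℝ :=
    fun k b => (L ⟨k, fun j => b j⟩ : ℝ) with hw
  have hwlim : ∀ k (b : ∀ j, Fin (N j)),
      Tendsto (fun m => ((μs (φ m) : Measure M) (cl k b)).toReal) atTop (𝓝 (w k b)) := by
    intro k b
    have h1 := hL ⟨k, fun j => b j⟩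
    have h2 : cl k (padc k (fun j : Fin (k+1) => b j)) = cl k b := by
      apply cl_congr
      intro j hj
      exact padc_le k (fun j : Fin (k+1) => b j) j hj
    rw [h2] at h1
    exact h1
  -- hypotheses of the tree machinery
  have hw0 : ∀ k b, 0 ≤ w k b := fun k b => (L ⟨k, fun j => b j⟩).2.1
  have hwc : ∀ k (b b' : ∀ j, Fin (N j)), (∀ j, j ≤ k → b j = b' j) → w k b = w k b' := by
    intro k b b' h
    have : (fun j : Fin (k+1) => b j) = (fun j : Fin (k+1) => b' j) := by
      funext j
      exact h j (by omega)
    simp only [hw, this]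
  have cl_upd0 : ∀ (b : ∀ j, Fin (N j)) (c : Fin (N 0)), cl 0 (Function.update b 0 c) = Q 0 c := by
    intro b c
    rw [cl_zero, Function.update_self]
  have cl_upds : ∀ k (b : ∀ j, Fin (N j)) (c : Fin (N (k+1))),
      cl (k+1) (Function.update b (k+1) c) = cl k b ∩ Q (k+1) c := by
    intro k b c
    rw [cl_succ, Function.update_self]
    congr 1
    apply cl_congr
    intro j hj
    exact Function.update_of_ne (by omega) _ _
  have hw1 : ∀ b : ∀ j, Fin (N j), ∑ c, w 0 (Function.update b 0 c) = 1 := by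
    intro b
    have hconst : ∀ m, ∑ c, ((μs (φ m) : Measure M) (cl 0 (Function.update b 0 c))).toReal
        = 1 := by
      intro m
      have h1 : ∑ c, (μs (φ m) : Measure M) (cl 0 (Function.update b 0 c))
          = (μs (φ m) : Measure M) univ := by
        have := sum_measure_inter (μs (φ m) : Measure M) (Q 0) (hQmeas 0) (hQdisj 0)
          (hQcover 0) (s := univ) MeasurableSet.univ
        rw [← this]
        apply Finset.sum_congr rfl
        intro c _
        rw [cl_upd0, Set.univ_inter]
      rw [← ENNReal.toReal_sum (fun c _ => measure_ne_top _ _), h1, measure_univ,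
        ENNReal.toReal_one]
    have h2 : Tendsto (fun m => ∑ c, ((μs (φ m) : Measure M)
        (cl 0 (Function.update b 0 c))).toReal) atTop (𝓝 (∑ c, w 0 (Function.update b 0 c))) :=
      tendsto_finset_sum _ (fun c _ => hwlim 0 _)
    have h3 : Tendsto (fun m : ℕ => (1:ℝ)) atTop (𝓝 1) := tendsto_const_nhds
    have h4 : (fun m => ∑ c, ((μs (φ m) : Measure M)
        (cl 0 (Function.update b 0 c))).toReal) = fun m : ℕ => (1:ℝ) := funext hconst
    rw [h4] at h2
    exact tendsto_nhds_unique h2 h3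
  have hws : ∀ k (b : ∀ j, Fin (N j)),
      ∑ c, w (k+1) (Function.update b (k+1) c) = w k b := by
    intro k b
    have hconst : ∀ m, ∑ c, ((μs (φ m) : Measure M) (cl (k+1) (Function.update b (k+1) c))).toReal
        = ((μs (φ m) : Measure M) (cl k b)).toReal := by
      intro m
      have h1 : ∑ c, (μs (φ m) : Measure M) (cl (k+1) (Function.update b (k+1) c))
          = (μs (φ m) : Measure M) (cl k b) := by
        have := sum_measure_inter (μs (φ m) : Measure M) (Q (k+1)) (hQmeas (k+1)) (hQdisj (k+1))
          (hQcover (k+1)) (cl_meas k b)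
        rw [← this]
        apply Finset.sum_congr rfl
        intro c _
        rw [cl_upds]
      rw [← ENNReal.toReal_sum (fun c _ => measure_ne_top _ _), h1]
    have h2 : Tendsto (fun m => ∑ c, ((μs (φ m) : Measure M)
        (cl (k+1) (Function.update b (k+1) c))).toReal) atTop
        (𝓝 (∑ c, w (k+1) (Function.update b (k+1) c))) :=
      tendsto_finset_sum _ (fun c _ => hwlim (k+1) _)
    have h4 : (fun m => ∑ c, ((μs (φ m) : Measure M)
        (cl (k+1) (Function.update b (k+1) c))).toReal)
        = fun m => ((μs (φ m) : Measure M) (cl k b)).toReal := funext hconst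
    rw [h4] at h2
    exact tendsto_nhds_unique h2 (hwlim k b)
  have hclpos : ∀ k (b : ∀ j, Fin (N j)), 0 < w k b → (cl k b).Nonempty := by
    intro k b hpos
    by_contra hemp
    rw [Set.not_nonempty_iff_eq_empty] at hemp
    have h1 : (fun m => ((μs (φ m) : Measure M) (cl k b)).toReal) = fun m : ℕ => (0:ℝ) := by
      funext m; rw [hemp]; simp
    have h2 := hwlim k b
    rw [h1] at h2
    have := tendsto_nhds_unique h2 tendsto_const_nhds
    linarith
  -- Step 4: points and the coding map
  set x₀ : M := Classical.arbitrary M with hx₀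
  set pt : Set M → M := fun S => if h : S.Nonempty then h.choose else x₀ with hptdef
  have hpt : ∀ S : Set M, S.Nonempty → pt S ∈ S := by
    intro S h
    simp only [hptdef, dif_pos h]
    exact h.choose_spec
  set gk : ℕ → ℝ → M := fun k t =>
    if t ∈ Set.Ico (0:ℝ) 1 then pt (cl k (treeB hNpos w t k)) else x₀ with hgk
  have hwpos : ∀ t ∈ Set.Ico (0:ℝ) 1, ∀ k, 0 < w k (treeB hNpos w t k) := by
    intro t ht k
    have hmem := treeB_mem hNpos w hwc hw0 hw1 hws ht.1 ht.2 k
    linarith [hmem.1, hmem.2]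
  have hgkmem : ∀ t ∈ Set.Ico (0:ℝ) 1, ∀ k, gk k t ∈ cl k (treeB hNpos w t k) := by
    intro t ht k
    simp only [hgk, if_pos ht]
    exact hpt _ (hclpos _ _ (hwpos t ht k))
  have hcl_treeB_anti : ∀ (t : ℝ) (k k' : ℕ), k ≤ k' →
      cl k' (treeB hNpos w t k') ⊆ cl k (treeB hNpos w t k) := by
    intro t k k' hkk'
    have h1 : cl k' (treeB hNpos w t k') ⊆ cl k (treeB hNpos w t k') := cl_anti _ _ _ hkk'
    have h2 : cl k (treeB hNpos w t k') = cl k (treeB hNpos w t k) :=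
      cl_congr _ _ _ (fun j hj => treeB_agree hNpos w t k' k hkk' j hj)
    rw [h2] at h1
    exact h1
  have hgkdist : ∀ (t : ℝ) (k k' : ℕ), k ≤ k' → dist (gk k t) (gk k' t) ≤ 1/((k:ℝ)+1) := by
    intro t k k' hkk'
    by_cases ht : t ∈ Set.Ico (0:ℝ) 1
    · have h1 := hgkmem t ht k
      have h2 : gk k' t ∈ cl k (treeB hNpos w t k) := hcl_treeB_anti t k k' hkk' (hgkmem t ht k')
      have h3 : gk k t ∈ Q k (treeB hNpos w t k k) := (cl_mem_iff _ _ _).1 h1 k le_rfl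
      have h4 : gk k' t ∈ Q k (treeB hNpos w t k k) := (cl_mem_iff _ _ _).1 h2 k le_rfl
      exact le_of_lt (hQdiam k _ _ h3 _ h4)
    · simp only [hgk, if_neg ht]
      rw [dist_self]
      positivity
  have hcauchy : ∀ t, CauchySeq (fun k => gk k t) := by
    intro t
    apply cauchySeq_of_le_tendsto_0 (b := fun k : ℕ => 1/((k:ℝ)+1))
    · intro m m' K hm hm'
      have hK : ∀ mm : ℕ, K ≤ mm → (1:ℝ)/((mm:ℝ)+1) ≤ 1/((K:ℝ)+1) := by
        intro mm hmm
        apply one_div_le_one_div_of_le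
        · positivity
        · have : (K:ℝ) ≤ mm := Nat.cast_le.2 hmm
          linarith
      rcases le_total m m' with h | h
      · calc dist (gk m t) (gk m' t) ≤ 1/((m:ℝ)+1) := hgkdist t m m' h
          _ ≤ 1/((K:ℝ)+1) := hK m hm
      · rw [dist_comm]
        calc dist (gk m' t) (gk m t) ≤ 1/((m':ℝ)+1) := hgkdist t m' m h
          _ ≤ 1/((K:ℝ)+1) := hK m' hm'
    · exact tendsto_one_div_add_atTop_nhds_zero_nat
  haveI : CompleteSpace M := complete_of_compact
  have hgexists : ∀ t : ℝ, ∃ z : M, Tendsto (fun k => gk k t) atTop (𝓝 z) := fun t =>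
    cauchySeq_tendsto_of_complete (hcauchy t)
  choose g hg using hgexists
  -- fibers of the coding map
  have hfib : ∀ k (p : ∀ j : Fin (k+1), Fin (N j)),
      {t : ℝ | t ∈ Set.Ico (0:ℝ) 1 ∧ ∀ j, j ≤ k → treeB hNpos w t k j = padc k p j}
        = Set.Ico (treeA w k (padc k p)) (treeA w k (padc k p) + w k (padc k p)) :=
    fun k p => treeB_fiber hNpos w hwc hw0 hw1 hws k (padc k p)
  have hgkmeas : ∀ k, Measurable (gk k) := by
    intro k
    have key : ∀ s : Set M, gk k ⁻¹' s =
        (⋃ (p : ∀ j : Fin (k+1), Fin (N j)) (_ : pt (cl k (padc k p)) ∈ s),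
          Set.Ico (treeA w k (padc k p)) (treeA w k (padc k p) + w k (padc k p)))
        ∪ ((Set.Ico (0:ℝ) 1)ᶜ ∩ (if x₀ ∈ s then Set.univ else ∅)) := by
      intro s
      ext t
      simp only [Set.mem_preimage, Set.mem_union, Set.mem_iUnion, Set.mem_inter_iff,
        Set.mem_compl_iff]
      by_cases ht : t ∈ Set.Ico (0:ℝ) 1
      · simp only [hgk, if_pos ht]
        constructor
        · intro hmem
          left
          refine ⟨fun j => treeB hNpos w t k j, ?_, ?_⟩
          · have hceq : cl k (padc k (fun j : Fin (k+1) => treeB hNpos w t k j))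
                = cl k (treeB hNpos w t k) :=
              cl_congr _ _ _ (fun j hj => padc_le k (fun j : Fin (k+1) => treeB hNpos w t k j) j hj)
            rw [hceq]
            exact hmem
          · rw [← hfib k (fun j : Fin (k+1) => treeB hNpos w t k j)]
            exact ⟨ht, fun j hj => (padc_le k (fun j : Fin (k+1) => treeB hNpos w t k j) j hj).symm⟩
        · rintro (⟨p, hp, hIp⟩ | ⟨htc, -⟩)
          · rw [← hfib k p] at hIp
            obtain ⟨-, hagree⟩ := hIp
            have hceq : cl k (treeB hNpos w t k) = cl k (padc k p) := cl_congr _ _ _ hagree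
            rw [hceq]
            exact hp
          · exact absurd ht htc
      · simp only [hgk, if_neg ht]
        constructor
        · intro hmem
          right
          refine ⟨ht, ?_⟩
          rw [if_pos hmem]
          trivial
        · rintro (⟨p, hp, hIp⟩ | ⟨-, hx⟩)
          · rw [← hfib k p] at hIp
            exact absurd hIp.1 ht
          · by_cases hx0 : x₀ ∈ s
            · exact hx0
            · rw [if_neg hx0] at hx
              exact absurd hx (Set.notMem_empty t)
    intro s hs
    rw [key s]
    apply MeasurableSet.union
    · exact MeasurableSet.iUnion (fun p => MeasurableSet.iUnion (fun _ => measurableSet_Ico))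
    · apply MeasurableSet.inter measurableSet_Ico.compl
      by_cases hx0 : x₀ ∈ s
      · rw [if_pos hx0]; exact MeasurableSet.univ
      · rw [if_neg hx0]; exact MeasurableSet.empty
  have hgmeas : Measurable g := measurable_of_tendsto_metrizable hgkmeas (tendsto_pi_nhds.2 hg)
  set μ₀ : Measure M := Measure.map g (volume.restrict (Set.Ico (0:ℝ) 1)) with hμ₀
  have hμ₀prob : IsProbabilityMeasure μ₀ := by
    constructor
    rw [hμ₀, Measure.map_apply hgmeas MeasurableSet.univ, Set.preimage_univ,
      Measure.restrict_apply MeasurableSet.univ, Set.univ_inter, Real.volume_Ico]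
    norm_num
  refine ⟨(⟨μ₀, hμ₀prob⟩ : ProbabilityMeasure M), φ, hφmono, ?_⟩
  refine ProbabilityMeasure.tendsto_iff_forall_integral_tendsto.2 ?_
  intro f
  rw [Metric.tendsto_atTop]
  intro ε hε
  have huc : UniformContinuous f := CompactSpace.uniformContinuous_of_continuous f.continuous
  obtain ⟨δ, hδpos, hδ⟩ := Metric.uniformContinuous_iff.1 huc (ε/8) (by positivity)
  obtain ⟨k, hk⟩ := exists_nat_one_div_lt hδpos
  set C : (∀ j : Fin (k+1), Fin (N j)) → Set M := fun p => cl k (padc k p) with hC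
  set xs : (∀ j : Fin (k+1), Fin (N j)) → M := fun p => pt (C p) with hxs
  set Iv : (∀ j : Fin (k+1), Fin (N j)) → Set ℝ := fun p =>
    Set.Ico (treeA w k (padc k p)) (treeA w k (padc k p) + w k (padc k p)) with hIv
  have hCmeas : ∀ p, MeasurableSet (C p) := fun p => cl_meas _ _
  have hCdisj : Pairwise (Function.onFun Disjoint C) := by
    intro p p' hne
    have hex : ∃ j : Fin (k+1), p j ≠ p' j := by
      by_contra hcon
      push_neg at hcon
      exact hne (funext hcon)
    obtain ⟨j, hj⟩ := hex
    apply cl_disj k _ _ (j:ℕ) (by omega)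
    rw [padc_le k p j (by omega), padc_le k p' j (by omega)]
    simpa using hj
  have hCcover : (⋃ p, C p) = univ := by
    apply eq_univ_of_univ_subset
    intro x _
    refine mem_iUnion.2 ⟨fun j => ix j x, ?_⟩
    have : x ∈ cl k (padc k (fun j : Fin (k+1) => ix j x)) := by
      rw [cl_mem_iff]
      intro j hj
      rw [padc_le k (fun j : Fin (k+1) => ix (j:ℕ) x) j hj]
      exact hix j x
    exact this
  have hosc : ∀ p, ∀ a ∈ C p, ∀ b ∈ C p, |f a - f b| ≤ ε/8 := by
    intro p a ha b hb
    have h3 : a ∈ Q k (padc k p k) := (cl_mem_iff _ _ _).1 ha k le_rfl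
    have h4 : b ∈ Q k (padc k p k) := (cl_mem_iff _ _ _).1 hb k le_rfl
    have hd : dist a b < δ := lt_trans (hQdiam k _ a h3 b h4) hk
    have h5 := hδ hd
    rw [Real.dist_eq] at h5
    linarith [h5]
  have hptC : ∀ p, (C p).Nonempty → xs p ∈ C p := fun p h => hpt _ h
  have hE1 : ∀ m, |∫ x, f x ∂(μs (φ m) : Measure M)
      - ∑ p, f (xs p) * ((μs (φ m) : Measure M) (C p)).toReal| ≤ ε/8 := by
    intro m
    exact abs_integral_sub_sum_le _ C hCmeas hCdisj hCcover f xs hptC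
      (by positivity) hosc
  have hE3 : Tendsto (fun m => ∑ p, f (xs p) * ((μs (φ m) : Measure M) (C p)).toReal)
      atTop (𝓝 (∑ p, f (xs p) * w k (padc k p))) := by
    apply tendsto_finset_sum
    intro p _
    exact ((hwlim k (padc k p)).const_mul _)
  have hIvdisj : Pairwise (Function.onFun Disjoint Iv) := by
    intro p p' hne
    rw [Function.onFun, Set.disjoint_left]
    intro t htp htp'
    have h1 : t ∈ {t : ℝ | t ∈ Set.Ico (0:ℝ) 1
        ∧ ∀ j, j ≤ k → treeB hNpos w t k j = padc k p j} := by rw [hfib k p]; exact htp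
    have h2 : t ∈ {t : ℝ | t ∈ Set.Ico (0:ℝ) 1
        ∧ ∀ j, j ≤ k → treeB hNpos w t k j = padc k p' j} := by rw [hfib k p']; exact htp'
    apply hne
    funext j
    have e1 := h1.2 j (by omega : (j:ℕ) ≤ k)
    have e2 := h2.2 j (by omega : (j:ℕ) ≤ k)
    rw [padc_le k p j (by omega)] at e1
    rw [padc_le k p' j (by omega)] at e2
    have e3 := e1.symm.trans e2
    simpa using e3
  have hIvcover : (⋃ p, Iv p) = Set.Ico (0:ℝ) 1 := by
    apply Set.Subset.antisymm
    · intro t ht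
      obtain ⟨p, hp⟩ := mem_iUnion.1 ht
      have hp' : t ∈ Set.Ico (treeA w k (padc k p)) (treeA w k (padc k p) + w k (padc k p)) := hp
      rw [← hfib k p] at hp'
      exact hp'.1
    · intro t ht
      refine mem_iUnion.2 ⟨fun j => treeB hNpos w t k j, ?_⟩
      have hmem : t ∈ {u : ℝ | u ∈ Set.Ico (0:ℝ) 1 ∧ ∀ j, j ≤ k → treeB hNpos w u k j
          = padc k (fun j : Fin (k+1) => treeB hNpos w t k (j:ℕ)) j} := by
        exact ⟨ht, fun j hj =>
          (padc_le k (fun j : Fin (k+1) => treeB hNpos w t k (j:ℕ)) j hj).symm⟩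
      rw [hfib k (fun j : Fin (k+1) => treeB hNpos w t k (j:ℕ))] at hmem
      exact hmem
  have hIvmeas : ∀ p, MeasurableSet (Iv p) := fun p => measurableSet_Ico
  have hgkconst : ∀ p, ∀ t ∈ Iv p, gk k t = xs p := by
    intro p t htp
    have h1 : t ∈ {t : ℝ | t ∈ Set.Ico (0:ℝ) 1
        ∧ ∀ j, j ≤ k → treeB hNpos w t k j = padc k p j} := by rw [hfib k p]; exact htp
    have hceq : cl k (treeB hNpos w t k) = cl k (padc k p) := cl_congr _ _ _ h1.2
    simp only [hgk, if_pos h1.1, hxs, hC, hceq]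
  have hfg_int : Integrable (fun t => f (g t)) (volume.restrict (Set.Ico (0:ℝ) 1)) := by
    apply Integrable.mono' (integrable_const ‖f‖)
    · exact (f.continuous.measurable.comp hgmeas).aestronglyMeasurable
    · exact Filter.Eventually.of_forall (fun t => f.norm_coe_le_norm (g t))
  have hfgk_int : Integrable (fun t => f (gk k t)) (volume.restrict (Set.Ico (0:ℝ) 1)) := by
    apply Integrable.mono' (integrable_const ‖f‖)
    · exact (f.continuous.measurable.comp (hgkmeas k)).aestronglyMeasurable
    · exact Filter.Eventually.of_forall (fun t => f.norm_coe_le_norm (gk k t))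
  have hEb : ∫ t in Set.Ico (0:ℝ) 1, f (gk k t) = ∑ p, f (xs p) * w k (padc k p) := by
    have hio : IntegrableOn (fun t => f (gk k t)) (⋃ p, Iv p) volume := by
      rw [hIvcover]
      exact hfgk_int
    rw [← hIvcover, integral_iUnion hIvmeas hIvdisj hio, tsum_fintype]
    apply Finset.sum_congr rfl
    intro p _
    rw [setIntegral_congr_fun (hIvmeas p) (fun t htp => congrArg f (hgkconst p t htp))]
    rw [setIntegral_const]
    have hvol : (volume (Iv p)).toReal = w k (padc k p) := by
      rw [show Iv p = _ from rfl, Real.volume_Ico]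
      rw [show treeA w k (padc k p) + w k (padc k p) - treeA w k (padc k p)
        = w k (padc k p) by ring]
      exact ENNReal.toReal_ofReal (hw0 _ _)
    rw [measureReal_def, hvol, smul_eq_mul, mul_comm]
  have hdistg : ∀ t ∈ Set.Ico (0:ℝ) 1, dist (g t) (gk k t) ≤ 1/((k:ℝ)+1) := by
    intro t ht
    have hconv : Tendsto (fun m => dist (gk m t) (gk k t)) atTop
        (𝓝 (dist (g t) (gk k t))) := (hg t).dist tendsto_const_nhds
    apply le_of_tendsto hconv
    filter_upwards [eventually_ge_atTop k] with m hm
    rw [dist_comm]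
    exact hgkdist t k m hm
  have hEa : |(∫ t in Set.Ico (0:ℝ) 1, f (g t)) - ∫ t in Set.Ico (0:ℝ) 1, f (gk k t)| ≤ ε/8 := by
    rw [← integral_sub hfg_int hfgk_int]
    have hbound : ∀ᵐ t ∂(volume.restrict (Set.Ico (0:ℝ) 1)), ‖f (g t) - f (gk k t)‖ ≤ ε/8 := by
      rw [ae_restrict_iff' measurableSet_Ico]
      apply Eventually.of_forall
      intro t ht
      have hd : dist (g t) (gk k t) < δ := lt_of_le_of_lt (hdistg t ht) hk
      have h5 := hδ hd
      rw [Real.dist_eq] at h5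
      have : |f (g t) - f (gk k t)| ≤ ε/8 := le_of_lt h5
      simpa using this
    calc |∫ t in Set.Ico (0:ℝ) 1, (f (g t) - f (gk k t))|
        = ‖∫ t in Set.Ico (0:ℝ) 1, (f (g t) - f (gk k t))‖ := rfl
      _ ≤ (ε/8) * ((volume.restrict (Set.Ico (0:ℝ) 1)) Set.univ).toReal :=
          norm_integral_le_of_norm_le_const hbound
      _ = ε/8 := by
          rw [Measure.restrict_apply MeasurableSet.univ, Set.univ_inter, Real.volume_Ico]
          norm_num
  have hμint : ∫ x, f x ∂μ₀ = ∫ t in Set.Ico (0:ℝ) 1, f (g t) := by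
    rw [hμ₀, integral_map hgmeas.aemeasurable f.continuous.aestronglyMeasurable]
  have hE2 : |(∫ x, f x ∂μ₀) - ∑ p, f (xs p) * w k (padc k p)| ≤ ε/8 := by
    rw [hμint, ← hEb]
    exact hEa
  obtain ⟨N₁, hN₁⟩ := Metric.tendsto_atTop.1 hE3 (ε/4) (by positivity)
  refine ⟨N₁, ?_⟩
  intro m hm
  have h3 := hN₁ m hm
  rw [Real.dist_eq] at h3
  have h1 := hE1 m
  have hgoal : |(∫ x, f x ∂(μs (φ m) : Measure M)) - ∫ x, f x ∂μ₀| < ε := by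
    set a := ∫ x, f x ∂(μs (φ m) : Measure M)
    set b := ∑ p, f (xs p) * ((μs (φ m) : Measure M) (C p)).toReal
    set c := ∑ p, f (xs p) * w k (padc k p)
    set d := ∫ x, f x ∂μ₀
    have t1 : |a - d| ≤ |a - b| + |b - d| := abs_sub_le a b d
    have t2 : |b - d| ≤ |b - c| + |c - d| := abs_sub_le b c d
    have t3 : |c - d| = |d - c| := abs_sub_comm c d
    linarith [h1, h3, hE2, t1, t2, t3.le, t3.ge]
  rw [Real.dist_eq]
  exact hgoal





end Main
theorem prob_isCompact_univ {M : Type*} [MetricSpace M] [CompactSpace M] [MeasurableSpace M]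
    [BorelSpace M] [Nonempty M] : IsCompact (Set.univ : Set (ProbabilityMeasure M)) := by
  have hseq : IsSeqCompact (Set.univ : Set (ProbabilityMeasure M)) := by
    intro x hx
    obtain ⟨μ, ψ, hm, ht⟩ := prob_seq_compact x
    exact ⟨μ, Set.mem_univ _, ψ, hm, ht⟩
  letI : MetricSpace (ProbabilityMeasure M) := TopologicalSpace.metrizableSpaceMetric _
  exact hseq.isCompact


/-- Frequency of visits, up to time `n - 1`, of the orbit of `x` to the
`ε`-neighborhood of `K`. -/
noncomputable def visitFreq {M : Type*} [MetricSpace M] (f : M → M) (K : Set M) (ε : ℝ)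
    (x : M) (n : ℕ) : ℝ :=
  (((Finset.range n).filter (fun j => infDist (f^[j] x) K < ε)).card : ℝ) / n

/-- Basin of statistical attraction of `K`. -/
def statBasin {M : Type*} [MetricSpace M] (f : M → M) (K : Set M) : Set M :=
  {x | ∀ ε > 0, Tendsto (fun n => visitFreq f K ε x n) atTop (𝓝 1)}

/-- The empirical probability measure `ν_{n+1}(x) = (1/(n+1)) ∑_{j=0}^{n} δ_{f^j(x)}`. -/
noncomputable def emp {M : Type*} [MeasurableSpace M] (f : M → M) (x : M) (n : ℕ) :
    ProbabilityMeasure M :=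
  ⟨((n + 1 : ℝ≥0∞))⁻¹ • ∑ j ∈ Finset.range (n + 1), Measure.dirac (f^[j] x), by
    constructor
    simp [Measure.smul_apply, Measure.finset_sum_apply]
    exact ENNReal.inv_mul_cancel (by simp) (by simp)⟩

/-- The limit set `L*(x)`: all weak* limits of convergent subsequences of `ν_n(x)`. -/
def Lstar {M : Type*} [MetricSpace M] [MeasurableSpace M] [OpensMeasurableSpace M]
    (f : M → M) (x : M) : Set (ProbabilityMeasure M) :=
  {μ | ∃ φ : ℕ → ℕ, StrictMono φ ∧ Tendsto (fun i => emp f x (φ i)) atTop (𝓝 μ)}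

/-- `d` is a metric on the space of Borel probability measures inducing the weak* topology. -/
def IsWeakStarMetric {M : Type*} [MetricSpace M] [MeasurableSpace M] [OpensMeasurableSpace M]
    (d : ProbabilityMeasure M → ProbabilityMeasure M → ℝ) : Prop :=
  (∀ μ ν, 0 ≤ d μ ν) ∧ (∀ μ ν, d μ ν = d ν μ) ∧ (∀ μ ν, d μ ν = 0 ↔ μ = ν) ∧
    (∀ μ ν ρ, d μ ρ ≤ d μ ν + d ν ρ) ∧
    (∀ (μ : ProbabilityMeasure M) (s : Set (ProbabilityMeasure M)),
      s ∈ 𝓝 μ ↔ ∃ ε > 0, {ν | d ν μ < ε} ⊆ s)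

/-- `μ` is SRB-like (physical-like) for `f` restricted to `B`: for every `ε > 0` the basin of
`ε`-weak statistical attraction `{x ∈ B : dist*(L*(x), μ) < ε}` has positive `m`-measure. -/
def SRBlike {M : Type*} [MetricSpace M] [MeasurableSpace M] [OpensMeasurableSpace M]
    (m : Measure M) (f : M → M) (B : Set M)
    (d : ProbabilityMeasure M → ProbabilityMeasure M → ℝ) (μ : ProbabilityMeasure M) : Prop :=
  ∀ ε > 0, 0 < m {x | x ∈ B ∧ ∃ ν ∈ Lstar f x, d ν μ < ε}

/-- the set of SRB-like measures for `f|_B` is nonempty and weak*-compact. -/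
theorem srbLike_nonempty_isCompact {M : Type*} [MetricSpace M] [CompactSpace M]
    [MeasurableSpace M] [BorelSpace M] (m : Measure M) [IsProbabilityMeasure m]
    (f : M → M) (hf : Measurable f) (B : Set M) (hB : MeasurableSet B)
    (hBinv : B ⊆ f ⁻¹' B) (hBm : 0 < m B)
    (d : ProbabilityMeasure M → ProbabilityMeasure M → ℝ) (hd : IsWeakStarMetric d) :
    {μ : ProbabilityMeasure M | SRBlike m f B d μ}.Nonempty ∧
      IsCompact {μ : ProbabilityMeasure M | SRBlike m f B d μ} := by
  classical
  have hBne : B.Nonempty := nonempty_of_measure_ne_zero (ne_of_gt hBm)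
  haveI : Nonempty M := ⟨hBne.choose⟩
  obtain ⟨hd0, hdsymm, hdeq, hdtri, hdnhds⟩ := hd
  have hcomp : IsCompact (Set.univ : Set (ProbabilityMeasure M)) := prob_isCompact_univ
  have hLne : ∀ x : M, (Lstar f x).Nonempty := by
    intro x
    obtain ⟨μ, ψ, hm, ht⟩ := prob_seq_compact (fun n => emp f x n)
    exact ⟨μ, ψ, hm, ht⟩
  constructor
  · by_contra hempty
    rw [Set.not_nonempty_iff_eq_empty] at hempty
    have hchoice : ∀ μ : ProbabilityMeasure M, ∃ ε > 0,
        m {x | x ∈ B ∧ ∃ ν ∈ Lstar f x, d ν μ < ε} = 0 := by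
      intro μ
      have hnot : ¬ SRBlike m f B d μ := by
        intro hμ
        have : μ ∈ {μ : ProbabilityMeasure M | SRBlike m f B d μ} := hμ
        rw [hempty] at this
        exact absurd this (Set.notMem_empty μ)
      rw [SRBlike] at hnot
      push_neg at hnot
      obtain ⟨ε, hε, h0⟩ := hnot
      refine ⟨ε, hε, ?_⟩
      exact le_antisymm h0 (zero_le)
    choose εf hεf hεf0 using hchoice
    set U : ProbabilityMeasure M → Set (ProbabilityMeasure M) := fun μ => {ν | d ν μ < εf μ}
      with hU
    have hUnhds : ∀ μ ∈ (Set.univ : Set (ProbabilityMeasure M)), U μ ∈ 𝓝 μ := fun μ _ =>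
      (hdnhds μ (U μ)).2 ⟨εf μ, hεf μ, subset_rfl⟩
    obtain ⟨t, -, ht⟩ := hcomp.elim_nhds_subcover U hUnhds
    have hBsub : B ⊆ ⋃ μ ∈ t, {x | x ∈ B ∧ ∃ ν ∈ Lstar f x, d ν μ < εf μ} := by
      intro x hx
      obtain ⟨ν, hν⟩ := hLne x
      have hmem : ν ∈ ⋃ μ ∈ t, U μ := ht (Set.mem_univ ν)
      obtain ⟨μ, hμt, hνμ⟩ := Set.mem_iUnion₂.1 hmem
      exact Set.mem_iUnion₂.2 ⟨μ, hμt, ⟨hx, ν, hν, hνμ⟩⟩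
    have hle : m B ≤ ∑ μ ∈ t, m {x | x ∈ B ∧ ∃ ν ∈ Lstar f x, d ν μ < εf μ} :=
      le_trans (measure_mono hBsub) (measure_biUnion_finset_le t _)
    rw [Finset.sum_eq_zero (fun μ _ => hεf0 μ)] at hle
    exact hBm.ne' (le_antisymm hle (zero_le))
  · have hclosed : IsClosed {μ : ProbabilityMeasure M | SRBlike m f B d μ} := by
      apply isClosed_of_closure_subset
      intro μ hμc
      intro ε hε
      have hnb : {ν | d ν μ < ε/2} ∈ 𝓝 μ := (hdnhds μ _).2 ⟨ε/2, by linarith, subset_rfl⟩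
      obtain ⟨μ', hμ'd, hμ'S⟩ := mem_closure_iff_nhds.1 hμc _ hnb
      have hpos := hμ'S (ε/2) (by linarith)
      apply lt_of_lt_of_le hpos
      apply measure_mono
      rintro x ⟨hxB, ν, hνL, hνd⟩
      refine ⟨hxB, ν, hνL, ?_⟩
      have htri := hdtri ν μ' μ
      have hd2 : d μ' μ < ε/2 := hμ'd
      linarith
    exact hcomp.of_isClosed_subset hclosed (Set.subset_univ _)
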